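/- arXiv:2209.05642 — 5 statements merged into one kernel-verified Lean document; each statement's English description precedes it below -/
import Mathlib

section
/- Let p > 1 and let f : (0,∞) → (0,∞) be differentiable with f'(y) ≥ (p-1)·f(y)^{(p-2)/(p-1)} for all y > 0. Then for any vectors a, b in ℝⁿ (a corresponding to ∇u, b to ∇v) and real numbers u ≥ 0, v > 0, the quantity L := |a|^p - p·(u^{p-1}/f(v))·|b|^{p-2}⟨b,a⟩ + (u^p·f'(v)/f(v)²)·|b|^p is nonnegative. -/
open Real
open scoped RealInnerProductSpace

theorem pointwise_nonlinear_picone_nonneg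
    (n : ℕ) (p : ℝ) (hp : 1 < p)
    (f f' : ℝ → ℝ)
    (hf : ∀ y > (0:ℝ), HasDerivAt f (f' y) y)
    (hfpos : ∀ y > (0:ℝ), 0 < f y)
    (hf' : ∀ y > (0:ℝ), (p - 1) * f y ^ ((p - 2) / (p - 1)) ≤ f' y)
    (u v : ℝ) (hu : 0 ≤ u) (hv : 0 < v)
    (a b : EuclideanSpace ℝ (Fin n)) :
    0 ≤ ‖a‖ ^ p - p * (u ^ (p - 1) / f v) * ‖b‖ ^ (p - 2) * ⟪b, a⟫
        + (u ^ p * f' v / (f v) ^ 2) * ‖b‖ ^ p := by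
  have hFpos : 0 < f v := hfpos v hv
  have hp0 : (0:ℝ) < p := by linarith
  have hp1 : (0:ℝ) < p - 1 := by linarith
  have hA : 0 ≤ ‖a‖ := norm_nonneg a
  have hB : 0 ≤ ‖b‖ := norm_nonneg b
  set t : ℝ := u / f v ^ ((1:ℝ)/(p-1)) with ht
  have hFr : 0 < f v ^ ((1:ℝ)/(p-1)) := rpow_pos_of_pos hFpos _
  have htnn : 0 ≤ t := div_nonneg hu hFr.le
  have h1 : t ^ (p-1) = u ^ (p-1) / f v := by
    rw [ht, div_rpow hu hFr.le, ← rpow_mul hFpos.le, one_div_mul_cancel hp1.ne',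
      rpow_one]
  have h2 : t ^ p = u ^ p / f v ^ (p/(p-1)) := by
    rw [ht, div_rpow hu hFr.le, ← rpow_mul hFpos.le, one_div_mul_eq_div]
  have hFq : 0 < f v ^ (p/(p-1)) := rpow_pos_of_pos hFpos _
  -- lower bound on the last term's coefficient
  have h3 : (p - 1) * t ^ p ≤ u ^ p * f' v / (f v) ^ 2 := by
    have hfv' := hf' v hv
    have hcoef : 0 ≤ u ^ p / (f v) ^ 2 := by positivity
    have hmul := mul_le_mul_of_nonneg_left hfv' hcoef
    have hexp : f v ^ ((p - 2) / (p - 1)) = (f v) ^ 2 / f v ^ (p/(p-1)) := by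
      rw [← rpow_natCast (f v) 2, ← rpow_sub hFpos]
      congr 1
      field_simp
      ring
    calc (p - 1) * t ^ p
        = u ^ p / (f v) ^ 2 * ((p - 1) * f v ^ ((p - 2) / (p - 1))) := by
          rw [h2, hexp]
          field_simp
      _ ≤ u ^ p / (f v) ^ 2 * f' v := hmul
      _ = u ^ p * f' v / (f v) ^ 2 := by ring
  -- Young's inequality
  have hconj : p.HolderConjugate (p/(p-1)) := Real.HolderConjugate.conjExponent hp
  have htB : 0 ≤ t * ‖b‖ := mul_nonneg htnn hB
  have h4 : p * ((t * ‖b‖) ^ (p - 1) * ‖a‖) ≤ ‖a‖ ^ p + (p - 1) * (t * ‖b‖) ^ p := by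
    have hy := Real.young_inequality_of_nonneg hA (rpow_nonneg htB (p-1)) hconj
    have hq : ((t * ‖b‖) ^ (p-1)) ^ (p/(p-1)) = (t * ‖b‖) ^ p := by
      rw [← rpow_mul htB]
      congr 1
      field_simp
    rw [hq, div_div_eq_mul_div] at hy
    have hm := mul_le_mul_of_nonneg_left hy hp0.le
    calc p * ((t * ‖b‖) ^ (p-1) * ‖a‖) = p * (‖a‖ * (t * ‖b‖) ^ (p-1)) := by ring
      _ ≤ p * (‖a‖ ^ p / p + (t * ‖b‖) ^ p * (p-1) / p) := hm
      _ = ‖a‖ ^ p + (p - 1) * (t * ‖b‖) ^ p := by field_simp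
  have h5 : (p-1) * (t * ‖b‖) ^ p ≤ (u ^ p * f' v / (f v) ^ 2) * ‖b‖ ^ p := by
    rw [mul_rpow htnn hB]
    calc (p-1) * (t ^ p * ‖b‖ ^ p) = ((p-1) * t ^ p) * ‖b‖ ^ p := by ring
      _ ≤ _ := mul_le_mul_of_nonneg_right h3 (rpow_nonneg hB p)
  rcases eq_or_lt_of_le hB with hB0 | hBpos
  · have hb0 : b = 0 := norm_eq_zero.mp hB0.symm
    subst hb0
    simp [zero_rpow hp0.ne']
    exact rpow_nonneg hA p
  · have hmid : p * (u ^ (p - 1) / f v) * ‖b‖ ^ (p - 2) * ⟪b, a⟫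
        ≤ p * ((t * ‖b‖) ^ (p - 1) * ‖a‖) := by
      have hip : ⟪b, a⟫ ≤ ‖b‖ * ‖a‖ := real_inner_le_norm b a
      have hc : 0 ≤ p * (u ^ (p - 1) / f v) * ‖b‖ ^ (p - 2) := by positivity
      have hBB : ‖b‖ ^ (p-2) * ‖b‖ = ‖b‖ ^ (p-1) := by
        nth_rewrite 2 [← rpow_one ‖b‖]
        rw [← rpow_add hBpos]
        ring_nf
      calc p * (u ^ (p - 1) / f v) * ‖b‖ ^ (p - 2) * ⟪b, a⟫
          ≤ p * (u ^ (p - 1) / f v) * ‖b‖ ^ (p - 2) * (‖b‖ * ‖a‖) :=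
            mul_le_mul_of_nonneg_left hip hc
        _ = p * ((t * ‖b‖) ^ (p - 1) * ‖a‖) := by
            rw [mul_rpow htnn hB, h1, ← hBB]; ring
    linarith [hmid, h4, h5]
end

section
/- Let p > 1 and u ≥ 0, v > 0 be real numbers, and a, b ∈ ℝⁿ. Then |a|^p + (p-1)·(u/v)^p·|b|^p - p·(u/v)^{p-1}·|b|^{p-2}·⟨b,a⟩ ≥ 0. -/
open Real
open scoped RealInnerProductSpace

theorem pointwise_picone_allegretto_huang
    (n : ℕ) (p : ℝ) (hp : 1 < p)
    (u v : ℝ) (hu : 0 ≤ u) (hv : 0 < v)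
    (a b : EuclideanSpace ℝ (Fin n)) :
    0 ≤ ‖a‖ ^ p + (p - 1) * (u / v) ^ p * ‖b‖ ^ p
        - p * (u / v) ^ (p - 1) * ‖b‖ ^ (p - 2) * ⟪b, a⟫ := by
  set t : ℝ := u / v with ht
  have hp0 : (0:ℝ) < p := lt_trans one_pos hp
  have htn : 0 ≤ t := div_nonneg hu hv.le
  have hXn : (0:ℝ) ≤ ‖a‖ := norm_nonneg a
  by_cases hb : b = 0
  · simp only [hb, inner_zero_left, mul_zero, sub_zero, norm_zero,
      Real.zero_rpow (ne_of_gt hp0), mul_zero]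
    have := Real.rpow_nonneg hXn p
    linarith
  · have hY : (0:ℝ) < ‖b‖ := norm_pos_iff.mpr hb
    have hconj : p.HolderConjugate (p / (p - 1)) :=
      Real.HolderConjugate.conjExponent hp
    have htY : (0:ℝ) ≤ t * ‖b‖ := by positivity
    have hY2 : (0:ℝ) ≤ (t * ‖b‖) ^ (p - 1) := Real.rpow_nonneg htY _
    have young : ‖a‖ * (t * ‖b‖) ^ (p - 1) ≤
        ‖a‖ ^ p / p + ((t * ‖b‖) ^ (p - 1)) ^ (p / (p - 1)) / (p / (p - 1)) :=
      Real.young_inequality_of_nonneg hXn hY2 hconj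
    have hpow : ((t * ‖b‖) ^ (p - 1)) ^ (p / (p - 1)) = (t * ‖b‖) ^ p := by
      rw [← Real.rpow_mul htY, hconj.sub_one_mul_conj]
    rw [hpow] at young
    have hq : (t * ‖b‖) ^ p / (p / (p - 1)) = (p - 1) / p * (t * ‖b‖) ^ p := by
      field_simp
    rw [hq] at young
    -- multiply young by p
    have young' : p * (‖a‖ * (t * ‖b‖) ^ (p - 1)) ≤ ‖a‖ ^ p + (p - 1) * (t * ‖b‖) ^ p := by
      have h := mul_le_mul_of_nonneg_left young hp0.le
      have : p * (‖a‖ ^ p / p + (p - 1) / p * (t * ‖b‖) ^ p)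
          = ‖a‖ ^ p + (p - 1) * (t * ‖b‖) ^ p := by
        field_simp
      linarith [h, this ▸ h]
    have hm1 : (t * ‖b‖) ^ (p - 1) = t ^ (p - 1) * ‖b‖ ^ (p - 1) :=
      Real.mul_rpow htn hY.le
    have hm2 : (t * ‖b‖) ^ p = t ^ p * ‖b‖ ^ p := Real.mul_rpow htn hY.le
    rw [hm1, hm2] at young'
    have hYsplit : ‖b‖ ^ (p - 1) = ‖b‖ ^ (p - 2) * ‖b‖ := by
      rw [← Real.rpow_add_one hY.ne' (p - 2)]
      congr 1
      ring
    have hinner : ⟪b, a⟫ ≤ ‖b‖ * ‖a‖ := real_inner_le_norm b a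
    have hc : (0:ℝ) ≤ p * t ^ (p - 1) * ‖b‖ ^ (p - 2) := by positivity
    have key : p * t ^ (p - 1) * ‖b‖ ^ (p - 2) * ⟪b, a⟫
        ≤ p * t ^ (p - 1) * ‖b‖ ^ (p - 2) * (‖b‖ * ‖a‖) :=
      mul_le_mul_of_nonneg_left hinner hc
    have heq : p * t ^ (p - 1) * ‖b‖ ^ (p - 2) * (‖b‖ * ‖a‖)
        = p * (‖a‖ * (t ^ (p - 1) * ‖b‖ ^ (p - 1))) := by
      rw [hYsplit]; ring
    linarith [key, heq ▸ key]
end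

section
/- Let p > 1, u ≥ 0, v > 0 reals and a, b ∈ ℝⁿ. The quantity |a|^p + (p-1)·(u/v)^p·|b|^p - p·(u/v)^{p-1}·|b|^{p-2}⟨b,a⟩ equals zero if and only if a = (u/v)·b and ⟨b,a⟩ = |a||b|. -/
open Real
open scoped RealInnerProductSpace

/-- Young-type inequality: for `s ≥ 0` and `p > 1`, `p * s ≤ s ^ p + (p - 1)`. -/
lemma picone_young_le {p : ℝ} (hp : 1 < p) {s : ℝ} (hs : 0 ≤ s) :
    p * s ≤ s ^ p + (p - 1) := by
  have h := one_add_mul_self_le_rpow_one_add (s := s - 1) (by linarith) (p := p) hp.le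
  have : (1 + (s - 1)) = s := by ring
  rw [this] at h
  nlinarith [h]

/-- Equality case of the Young-type inequality. -/
lemma picone_young_eq {p : ℝ} (hp : 1 < p) {s : ℝ} (hs : 0 ≤ s)
    (h : p * s = s ^ p + (p - 1)) : s = 1 := by
  by_contra hne
  have h' := one_add_mul_self_lt_rpow_one_add (s := s - 1) (by linarith)
    (by intro h0; apply hne; linarith) hp
  have : (1 + (s - 1)) = s := by ring
  rw [this] at h'
  nlinarith

theorem pointwise_picone_equality_case
    (n : ℕ) (p : ℝ) (hp : 1 < p)
    (u v : ℝ) (hu : 0 ≤ u) (hv : 0 < v)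
    (a b : EuclideanSpace ℝ (Fin n)) :
    ‖a‖ ^ p + (p - 1) * (u / v) ^ p * ‖b‖ ^ p
        - p * (u / v) ^ (p - 1) * ‖b‖ ^ (p - 2) * ⟪b, a⟫ = 0 ↔
      a = (u / v) • b ∧ ⟪b, a⟫ = ‖a‖ * ‖b‖ := by
  set t : ℝ := u / v with ht_def
  clear_value t
  have ht : 0 ≤ t := ht_def ▸ div_nonneg hu hv.le
  have hp0 : (0:ℝ) < p := by linarith
  have hp1 : (0:ℝ) < p - 1 := by linarith
  -- degenerate case b = 0
  by_cases hb : b = 0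
  · subst hb
    simp only [inner_zero_left, norm_zero, mul_zero, zero_mul, smul_zero]
    rw [Real.zero_rpow hp0.ne', mul_zero, sub_zero, add_zero]
    constructor
    · intro h
      have : ‖a‖ = 0 := by
        have := (Real.rpow_eq_zero (norm_nonneg a) hp0.ne').mp h
        exact this
      constructor
      · exact norm_eq_zero.mp this
      · simp [norm_eq_zero.mp this]
    · rintro ⟨ha, -⟩
      rw [ha]
      simp [Real.zero_rpow hp0.ne']
  -- degenerate case t = 0
  by_cases htz : t = 0
  · rw [htz]
    rw [Real.zero_rpow hp0.ne', Real.zero_rpow hp1.ne']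
    simp only [mul_zero, zero_mul, zero_smul, sub_zero, add_zero]
    constructor
    · intro h
      have h0 : ‖a‖ = 0 := (Real.rpow_eq_zero (norm_nonneg a) hp0.ne').mp h
      have ha : a = 0 := norm_eq_zero.mp h0
      exact ⟨ha, by simp [ha]⟩
    · rintro ⟨ha, -⟩
      rw [ha, norm_zero, Real.zero_rpow hp0.ne']
  -- main case: t > 0 and b ≠ 0
  have htpos : 0 < t := lt_of_le_of_ne ht (Ne.symm htz)
  have hB : (0:ℝ) < ‖b‖ := norm_pos_iff.mpr hb
  have htB : (0:ℝ) < t * ‖b‖ := mul_pos htpos hB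
  -- useful rpow identities
  have hmul : (t * ‖b‖) ^ p = t ^ p * ‖b‖ ^ p := Real.mul_rpow ht (norm_nonneg b)
  have hmul1 : (t * ‖b‖) ^ (p - 1) = t ^ (p - 1) * ‖b‖ ^ (p - 1) :=
    Real.mul_rpow ht (norm_nonneg b)
  have hBsplit : ‖b‖ ^ (p - 1) = ‖b‖ ^ (p - 2) * ‖b‖ := by
    have : p - 1 = (p - 2) + 1 := by ring
    rw [this, Real.rpow_add hB, Real.rpow_one]
  have htBsplit : (t * ‖b‖) ^ p = (t * ‖b‖) ^ (p - 1) * (t * ‖b‖) := by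
    have : p = (p - 1) + 1 := by ring
    nth_rewrite 1 [this]
    rw [Real.rpow_add htB, Real.rpow_one]
  constructor
  · intro h
    -- set s = ‖a‖ / (t‖b‖)
    set s : ℝ := ‖a‖ / (t * ‖b‖) with hs_def
    have hs : 0 ≤ s := div_nonneg (norm_nonneg a) htB.le
    have hAs : ‖a‖ = s * (t * ‖b‖) := (div_mul_cancel₀ _ htB.ne').symm
    have hAp : ‖a‖ ^ p = s ^ p * (t * ‖b‖) ^ p := by
      rw [hAs, Real.mul_rpow hs htB.le]
    have hCS : ⟪b, a⟫ ≤ ‖b‖ * ‖a‖ := real_inner_le_norm b a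
    -- chain of inequalities
    have key : p * t ^ (p - 1) * ‖b‖ ^ (p - 2) * ⟪b, a⟫
        ≤ p * s * (t * ‖b‖) ^ p := by
      calc p * t ^ (p - 1) * ‖b‖ ^ (p - 2) * ⟪b, a⟫
          ≤ p * t ^ (p - 1) * ‖b‖ ^ (p - 2) * (‖b‖ * ‖a‖) := by
            apply mul_le_mul_of_nonneg_left hCS
            positivity
        _ = p * (t * ‖b‖) ^ (p - 1) * ‖a‖ := by
            rw [hmul1, hBsplit]; ring
        _ = p * s * (t * ‖b‖) ^ p := by
            rw [htBsplit, hAs]; ring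
    have hyoung := picone_young_le hp hs
    have hy' : p * s * (t * ‖b‖) ^ p ≤ (s ^ p + (p - 1)) * (t * ‖b‖) ^ p := by
      apply mul_le_mul_of_nonneg_right hyoung (le_of_lt (Real.rpow_pos_of_pos htB p))
    -- from the equation, LHS of key equals the RHS of hy'
    have heq : p * t ^ (p - 1) * ‖b‖ ^ (p - 2) * ⟪b, a⟫
        = (s ^ p + (p - 1)) * (t * ‖b‖) ^ p := by
      have : ‖a‖ ^ p + (p - 1) * t ^ p * ‖b‖ ^ p
          = p * t ^ (p - 1) * ‖b‖ ^ (p - 2) * ⟪b, a⟫ := by linarith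
      rw [← this, hAp, hmul]; ring
    -- hence all inequalities are equalities
    have htBp : (0:ℝ) < (t * ‖b‖) ^ p := Real.rpow_pos_of_pos htB p
    have hyeq : p * s = s ^ p + (p - 1) := by
      have h1 : p * s * (t * ‖b‖) ^ p = (s ^ p + (p - 1)) * (t * ‖b‖) ^ p := by
        refine le_antisymm hy' ?_
        rw [← heq]; exact key
      exact mul_right_cancel₀ htBp.ne' h1
    have hs1 : s = 1 := picone_young_eq hp hs hyeq
    have hAtB : ‖a‖ = t * ‖b‖ := by rw [hAs, hs1, one_mul]
    -- Cauchy-Schwarz equality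
    have hCSeq : ⟪b, a⟫ = ‖b‖ * ‖a‖ := by
      have h1 : p * t ^ (p - 1) * ‖b‖ ^ (p - 2) * ⟪b, a⟫
          = p * t ^ (p - 1) * ‖b‖ ^ (p - 2) * (‖b‖ * ‖a‖) := by
        rw [heq, hs1, Real.one_rpow]
        rw [htBsplit, hmul1, hBsplit, hAtB]
        ring_nf
      have hc : (0:ℝ) < p * t ^ (p - 1) * ‖b‖ ^ (p - 2) := by positivity
      exact mul_left_cancel₀ hc.ne' h1
    have hsmul : ‖a‖ • b = ‖b‖ • a := inner_eq_norm_mul_iff_real.mp hCSeq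
    have hab : a = t • b := by
      have : ‖b‖ • a = ‖b‖ • (t • b) := by
        rw [← hsmul, hAtB, mul_smul, smul_comm]
      exact smul_right_injective _ (ne_of_gt hB) this.symm |>.symm
      -- fallback below if needed
    exact ⟨hab, by rw [hCSeq]; ring⟩
  · rintro ⟨hab, -⟩
    have hA : ‖a‖ = t * ‖b‖ := by
      rw [hab, norm_smul, Real.norm_eq_abs, abs_of_nonneg ht]
    have hinner : ⟪b, a⟫ = t * (‖b‖ * ‖b‖) := by
      rw [hab, real_inner_smul_right, real_inner_self_eq_norm_mul_norm]
    rw [hA, hinner, Real.mul_rpow ht (norm_nonneg b)]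
    have hB2 : ‖b‖ ^ (p - 2) * (‖b‖ * ‖b‖) = ‖b‖ ^ p := by
      have : p = (p - 2) + 1 + 1 := by ring
      rw [this, Real.rpow_add hB, Real.rpow_add hB, Real.rpow_one]
      ring
    have htp : t ^ (p - 1) * t = t ^ p := by
      have h2 := (Real.rpow_add htpos (p - 1) 1).symm
      rw [Real.rpow_one] at h2
      rw [h2]; norm_num
    have hfin : p * t ^ (p - 1) * ‖b‖ ^ (p - 2) * (t * (‖b‖ * ‖b‖))
        = p * t ^ p * ‖b‖ ^ p := by
      rw [← htp, ← hB2]; ring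
    linarith
end

section
/- Let u, v : Ω → ℝ be C¹ functions on an open set Ω ⊆ ℝⁿ with u ≥ 0 and v > 0, let p : Ω → ℝ be C¹ with p(x) > 1, and let f : (0,∞) → (0,∞) be C¹ with f'(y) ≥ (p(x)-1)·f(y)^{(p(x)-2)/(p(x)-1)}. Then at every point x ∈ Ω, the expression L(u,v)(x) := |∇u|^{p(x)} - (u^{p(x)}·ln u / f(v))·|∇v|^{p(x)-2}⟨∇v, ∇p⟩ - p(x)·(u^{p(x)-1}/f(v))·|∇v|^{p(x)-2}⟨∇v, ∇u⟩ + (u^{p(x)}·f'(v)/f(v)²)·|∇v|^{p(x)} equals R(u,v)(x) := |∇u|^{p(x)} - ⟨∇(u^{p(x)}/f(v)), |∇v|^{p(x)-2}∇v⟩. -/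
open Real
open scoped RealInnerProductSpace
open Filter Asymptotics
open scoped Topology

theorem aux_rpow_zero (n : ℕ) (Ω : Set (EuclideanSpace ℝ (Fin n))) (hΩ : IsOpen Ω)
    (u p : EuclideanSpace ℝ (Fin n) → ℝ) (x : EuclideanSpace ℝ (Fin n)) (hx : x ∈ Ω)
    (hu : ContDiffOn ℝ 1 u Ω) (hp : ContDiffOn ℝ 1 p Ω)
    (hu0 : ∀ y ∈ Ω, 0 ≤ u y) (hp1 : 1 < p x) (h0 : u x = 0) :
    HasFDerivAt (fun y => u y ^ p y) (0 : EuclideanSpace ℝ (Fin n) →L[ℝ] ℝ) x := by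
  have hud : HasFDerivAt u (fderiv ℝ u x) x :=
    ((hu.contDiffAt (hΩ.mem_nhds hx)).differentiableAt one_ne_zero).hasFDerivAt
  have hbigO : (fun y => u y) =O[𝓝 x] (fun y => y - x) := by
    simpa [h0] using hud.isBigO_sub
  obtain ⟨c, hcpos, hcO⟩ := hbigO.exists_pos
  have hc_ev : ∀ᶠ y in 𝓝 x, ‖u y‖ ≤ c * ‖y - x‖ := hcO.bound
  set q : ℝ := (1 + p x) / 2 with hq
  have hq1 : 1 < q := by rw [hq]; linarith
  have hqp : q < p x := by rw [hq]; linarith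
  have hpc : ContinuousAt p x := (hp.contDiffAt (hΩ.mem_nhds hx)).continuousAt
  have hev_p : ∀ᶠ y in 𝓝 x, q ≤ p y := hpc.eventually (eventually_ge_nhds hqp)
  have huc : ContinuousAt u x := (hu.contDiffAt (hΩ.mem_nhds hx)).continuousAt
  have hev_u1 : ∀ᶠ y in 𝓝 x, u y ≤ 1 := by
    have : Tendsto u (𝓝 x) (𝓝 0) := h0 ▸ huc
    exact this.eventually (eventually_le_nhds one_pos)
  have hev_u0 : ∀ᶠ y in 𝓝 x, 0 ≤ u y := by
    filter_upwards [hΩ.mem_nhds hx] with y hy using hu0 y hy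
  rw [hasFDerivAt_iff_isLittleO, isLittleO_iff]
  intro ε hε
  have htend : Tendsto (fun y => c ^ q * ‖y - x‖ ^ (q - 1)) (𝓝 x) (𝓝 0) := by
    have h1 : Tendsto (fun y : EuclideanSpace ℝ (Fin n) => ‖y - x‖) (𝓝 x) (𝓝 0) := by
      have hcont : Continuous (fun y : EuclideanSpace ℝ (Fin n) => ‖y - x‖) :=
        (continuous_id.sub continuous_const).norm
      simpa using hcont.tendsto x
    have h2 : Tendsto (fun t : ℝ => c ^ q * t ^ (q - 1)) (𝓝 0) (𝓝 0) := by
      have h3 : ContinuousAt (fun t : ℝ => t ^ (q - 1)) 0 :=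
        Real.continuousAt_rpow_const 0 (q - 1) (Or.inr (by linarith))
      have := (h3.tendsto).const_mul (c ^ q)
      simpa [Real.zero_rpow (by linarith : q - 1 ≠ 0)] using this
    exact h2.comp h1
  have hev_g : ∀ᶠ y in 𝓝 x, c ^ q * ‖y - x‖ ^ (q - 1) ≤ ε :=
    htend.eventually (eventually_le_nhds hε)
  filter_upwards [hc_ev, hev_p, hev_u1, hev_u0, hev_g] with y h1 h2 h3 h4 h5
  simp only [h0, Real.zero_rpow (by linarith : p x ≠ 0), sub_zero,
    ContinuousLinearMap.zero_apply]
  rw [Real.norm_eq_abs, abs_of_nonneg (Real.rpow_nonneg h4 _)]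
  rcases eq_or_lt_of_le h4 with h4' | h4'
  · rw [← h4', Real.zero_rpow (by linarith : p y ≠ 0)]
    positivity
  · have hr : 0 < ‖y - x‖ := by
      by_contra hr
      push_neg at hr
      have : ‖u y‖ ≤ 0 := le_trans h1 (by nlinarith)
      simp [Real.norm_eq_abs, abs_of_pos h4'] at this
      linarith
    have step1 : u y ^ p y ≤ u y ^ q :=
      Real.rpow_le_rpow_of_exponent_ge h4' h3 h2
    have huy : u y ≤ c * ‖y - x‖ := le_trans (le_abs_self _) h1
    have step2 : u y ^ q ≤ (c * ‖y - x‖) ^ q :=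
      Real.rpow_le_rpow h4 huy (by linarith)
    have step3 : (c * ‖y - x‖) ^ q = c ^ q * (‖y - x‖ ^ (q - 1) * ‖y - x‖) := by
      have h := Real.rpow_add hr (q - 1) 1
      rw [Real.rpow_one] at h
      rw [Real.mul_rpow hcpos.le hr.le]
      congr 1
      rw [← h]
      congr 1
      ring
    have : u y ^ p y ≤ c ^ q * ‖y - x‖ ^ (q - 1) * ‖y - x‖ := by
      rw [mul_assoc, ← step3]; exact le_trans step1 step2
    calc u y ^ p y ≤ c ^ q * ‖y - x‖ ^ (q - 1) * ‖y - x‖ := this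
      _ ≤ ε * ‖y - x‖ := mul_le_mul_of_nonneg_right h5 hr.le

theorem aux_inner (n : ℕ) (F : EuclideanSpace ℝ (Fin n) → ℝ) (x w : EuclideanSpace ℝ (Fin n)) :
    fderiv ℝ F x w = ⟪gradient F x, w⟫ :=
  (InnerProductSpace.toDual_symm_apply).symm

theorem variable_exponent_picone_identity
    (n : ℕ) (Ω : Set (EuclideanSpace ℝ (Fin n))) (hΩ : IsOpen Ω)
    (u v p : EuclideanSpace ℝ (Fin n) → ℝ)
    (hu : ContDiffOn ℝ 1 u Ω) (hv : ContDiffOn ℝ 1 v Ω) (hp : ContDiffOn ℝ 1 p Ω)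
    (hu0 : ∀ x ∈ Ω, 0 ≤ u x) (hv0 : ∀ x ∈ Ω, 0 < v x) (hp1 : ∀ x ∈ Ω, 1 < p x)
    (f f' : ℝ → ℝ)
    (hf : ∀ y > (0:ℝ), HasDerivAt f (f' y) y)
    (hfpos : ∀ y > (0:ℝ), 0 < f y)
    (hf' : ∀ x ∈ Ω, ∀ y > (0:ℝ), (p x - 1) * f y ^ ((p x - 2) / (p x - 1)) ≤ f' y) :
    ∀ x ∈ Ω,
      ‖gradient u x‖ ^ p x
        - (u x ^ p x * Real.log (u x) / f (v x)) * ‖gradient v x‖ ^ (p x - 2)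
            * ⟪gradient v x, gradient p x⟫
        - p x * (u x ^ (p x - 1) / f (v x)) * ‖gradient v x‖ ^ (p x - 2)
            * ⟪gradient v x, gradient u x⟫
        + (u x ^ p x * f' (v x) / (f (v x)) ^ 2) * ‖gradient v x‖ ^ p x
      = ‖gradient u x‖ ^ p x
        - ⟪gradient (fun y => u y ^ p y / f (v y)) x,
            (‖gradient v x‖ ^ (p x - 2)) • gradient v x⟫ := by
  intro x hx
  have hxn : Ω ∈ 𝓝 x := hΩ.mem_nhds hx
  have hvx : 0 < v x := hv0 x hx
  have hfv : 0 < f (v x) := hfpos _ hvx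
  have hpx : 1 < p x := hp1 x hx
  have hud : HasFDerivAt u (fderiv ℝ u x) x :=
    ((hu.contDiffAt hxn).differentiableAt one_ne_zero).hasFDerivAt
  have hvd : HasFDerivAt v (fderiv ℝ v x) x :=
    ((hv.contDiffAt hxn).differentiableAt one_ne_zero).hasFDerivAt
  have hpd : HasFDerivAt p (fderiv ℝ p x) x :=
    ((hp.contDiffAt hxn).differentiableAt one_ne_zero).hasFDerivAt
  -- derivative of y ↦ (f (v y))⁻¹
  have hgd : HasFDerivAt (fun y => (f (v y))⁻¹)
      ((-f' (v x) / f (v x) ^ 2) • fderiv ℝ v x) x := by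
    have h1 : HasDerivAt (fun t => (f t)⁻¹) (-f' (v x) / f (v x) ^ 2) (v x) :=
      (hf _ hvx).inv hfv.ne'
    exact h1.comp_hasFDerivAt x hvd
  set w : EuclideanSpace ℝ (Fin n) :=
    (‖gradient v x‖ ^ (p x - 2)) • gradient v x with hw
  -- inner products as fderiv applications
  have hiu : fderiv ℝ u x w = ⟪gradient u x, w⟫ := aux_inner n u x w
  have hiv : fderiv ℝ v x w = ⟪gradient v x, w⟫ := aux_inner n v x w
  have hip : fderiv ℝ p x w = ⟪gradient p x, w⟫ := aux_inner n p x w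
  rcases eq_or_lt_of_le (hu0 x hx) with h0 | hupos
  · -- degenerate case u x = 0
    have h0 : u x = 0 := h0.symm
    have hN : HasFDerivAt (fun y => u y ^ p y)
        (0 : EuclideanSpace ℝ (Fin n) →L[ℝ] ℝ) x :=
      aux_rpow_zero n Ω hΩ u p x hx hu hp hu0 hpx h0
    have hF : HasFDerivAt (fun y => u y ^ p y / f (v y))
        (0 : EuclideanSpace ℝ (Fin n) →L[ℝ] ℝ) x := by
      have := hN.mul hgd
      simp only [h0, Real.zero_rpow (by linarith : p x ≠ 0), zero_smul,
        smul_zero, add_zero, zero_add] at this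
      simpa [div_eq_mul_inv, Pi.mul_def] using this
    have hgradF : gradient (fun y => u y ^ p y / f (v y)) x = 0 := by
      have := hF.hasGradientAt.gradient
      simpa using this
    rw [hgradF]
    simp [h0, Real.zero_rpow (by linarith : p x ≠ 0),
      Real.zero_rpow (by linarith : p x - 1 ≠ 0)]
  · -- main case u x > 0
    have hN : HasFDerivAt (fun y => u y ^ p y)
        ((p x * u x ^ (p x - 1)) • fderiv ℝ u x
          + (u x ^ p x * Real.log (u x)) • fderiv ℝ p x) x :=
      hud.rpow hpd hupos
    have hF : HasFDerivAt (fun y => u y ^ p y / f (v y))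
        ((u x ^ p x) • ((-f' (v x) / f (v x) ^ 2) • fderiv ℝ v x)
          + (f (v x))⁻¹ • ((p x * u x ^ (p x - 1)) • fderiv ℝ u x
            + (u x ^ p x * Real.log (u x)) • fderiv ℝ p x)) x := by
      have := hN.mul hgd
      simpa [div_eq_mul_inv, Pi.mul_def] using this
    have hinner : ⟪gradient (fun y => u y ^ p y / f (v y)) x, w⟫
        = (u x ^ p x) * ((-f' (v x) / f (v x) ^ 2) * ⟪gradient v x, w⟫)
          + (f (v x))⁻¹ * ((p x * u x ^ (p x - 1)) * ⟪gradient u x, w⟫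
            + (u x ^ p x * Real.log (u x)) * ⟪gradient p x, w⟫) := by
      rw [← aux_inner, hF.fderiv]
      simp only [ContinuousLinearMap.add_apply, ContinuousLinearMap.coe_smul',
        Pi.smul_apply, smul_eq_mul]
      rw [hiu, hiv, hip]
    rw [hinner]
    -- expand inner products with w
    have e1 : ⟪gradient v x, w⟫ = ‖gradient v x‖ ^ (p x - 2) * ‖gradient v x‖ ^ 2 := by
      rw [hw, real_inner_smul_right, real_inner_self_eq_norm_sq]
    have e2 : ⟪gradient u x, w⟫
        = ‖gradient v x‖ ^ (p x - 2) * ⟪gradient v x, gradient u x⟫ := by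
      rw [hw, real_inner_smul_right, real_inner_comm]
    have e3 : ⟪gradient p x, w⟫
        = ‖gradient v x‖ ^ (p x - 2) * ⟪gradient v x, gradient p x⟫ := by
      rw [hw, real_inner_smul_right, real_inner_comm]
    rw [e1, e2, e3]
    rcases eq_or_lt_of_le (norm_nonneg (gradient v x)) with hG | hG
    · have hG : ‖gradient v x‖ = 0 := hG.symm
      have hGz : gradient v x = 0 := norm_eq_zero.mp hG
      rw [hG, hGz]
      simp [Real.zero_rpow (by linarith : p x ≠ 0)]
    · have key : ‖gradient v x‖ ^ (p x - 2) * ‖gradient v x‖ ^ 2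
          = ‖gradient v x‖ ^ p x := by
        rw [← Real.rpow_two, ← Real.rpow_add hG]
        ring_nf
      rw [mul_comm (‖gradient v x‖ ^ (p x - 2)) (‖gradient v x‖ ^ 2)] at key
      linear_combination (-(u x ^ p x * f' (v x) / f (v x) ^ 2)) * key
end

section
/- Let u, v : Ω → ℝ be C¹ on open Ω ⊆ ℝⁿ with u ≥ 0, v > 0, p : Ω → ℝ C¹ with p(x) > 1, f : (0,∞) → (0,∞) C¹ satisfying f'(y) ≥ (p(x)-1)·f(y)^{(p(x)-2)/(p(x)-1)}, and assume ⟨∇v(x), ∇p(x)⟩ = 0 for all x. Then the Picone expression L(u,v)(x) := |∇u|^{p(x)} - (u^{p(x)} ln u / f(v))|∇v|^{p(x)-2}⟨∇v,∇p⟩ - p(x)(u^{p(x)-1}/f(v))|∇v|^{p(x)-2}⟨∇v,∇u⟩ + (u^{p(x)} f'(v)/f(v)²)|∇v|^{p(x)} is nonnegative at every x ∈ Ω. -/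
open Real
open scoped RealInnerProductSpace

lemma young_aux {a B P : ℝ} (ha : 0 ≤ a) (hB : 0 ≤ B) (hP : 1 < P) :
    P * (a * B ^ (P - 1)) ≤ a ^ P + (P - 1) * B ^ P := by
  have hpq : P.HolderConjugate (P / (P - 1)) :=
    Real.HolderConjugate.conjExponent hP
  have hy := Real.young_inequality_of_nonneg ha (Real.rpow_nonneg hB (P - 1)) hpq
  have hBP : (B ^ (P - 1)) ^ (P / (P - 1)) = B ^ P := by
    rw [← Real.rpow_mul hB]
    congr 1
    field_simp
    rw [div_self (by linarith : P - 1 ≠ 0)]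
  rw [hBP] at hy
  have hPpos : (0:ℝ) < P := lt_trans one_pos hP
  have hQpos : (0:ℝ) < P / (P - 1) := div_pos hPpos (by linarith)
  have := mul_le_mul_of_nonneg_left hy hPpos.le
  calc P * (a * B ^ (P-1)) ≤ P * (a ^ P / P + B ^ P / (P / (P - 1))) := this
    _ = a ^ P + (P - 1) * B ^ P := by
        field_simp

theorem variable_exponent_picone_nonneg
    (n : ℕ) (Ω : Set (EuclideanSpace ℝ (Fin n))) (hΩ : IsOpen Ω)
    (u v p : EuclideanSpace ℝ (Fin n) → ℝ)
    (hu : ContDiffOn ℝ 1 u Ω) (hv : ContDiffOn ℝ 1 v Ω) (hp : ContDiffOn ℝ 1 p Ω)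
    (hu0 : ∀ x ∈ Ω, 0 ≤ u x) (hv0 : ∀ x ∈ Ω, 0 < v x) (hp1 : ∀ x ∈ Ω, 1 < p x)
    (f f' : ℝ → ℝ)
    (hf : ∀ y > (0:ℝ), HasDerivAt f (f' y) y)
    (hfpos : ∀ y > (0:ℝ), 0 < f y)
    (hf' : ∀ x ∈ Ω, ∀ y > (0:ℝ), (p x - 1) * f y ^ ((p x - 2) / (p x - 1)) ≤ f' y)
    (horth : ∀ x ∈ Ω, ⟪gradient v x, gradient p x⟫ = 0) :
    ∀ x ∈ Ω,
      0 ≤ ‖gradient u x‖ ^ p x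
        - (u x ^ p x * Real.log (u x) / f (v x)) * ‖gradient v x‖ ^ (p x - 2)
            * ⟪gradient v x, gradient p x⟫
        - p x * (u x ^ (p x - 1) / f (v x)) * ‖gradient v x‖ ^ (p x - 2)
            * ⟪gradient v x, gradient u x⟫
        + (u x ^ p x * f' (v x) / (f (v x)) ^ 2) * ‖gradient v x‖ ^ p x := by
  intro x hx
  have hP : 1 < p x := hp1 x hx
  have hPpos : (0:ℝ) < p x := lt_trans one_pos hP
  have hU : 0 ≤ u x := hu0 x hx
  have hF : 0 < f (v x) := hfpos _ (hv0 x hx)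
  rw [horth x hx, mul_zero, sub_zero]
  set a := ‖gradient u x‖ with ha_def
  set b := ‖gradient v x‖ with hb_def
  have ha : 0 ≤ a := norm_nonneg _
  have hbn : 0 ≤ b := norm_nonneg _
  rcases eq_or_lt_of_le hbn with hb0 | hb
  · -- gradient v x = 0
    have hg : gradient v x = 0 := norm_eq_zero.mp hb0.symm
    rw [hg]
    simp only [inner_zero_left, mul_zero, sub_zero]
    rw [show b = 0 from hb0.symm, Real.zero_rpow hPpos.ne', mul_zero, add_zero]
    exact Real.rpow_nonneg ha _
  · -- b > 0
    set P := p x with hPdef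
    set F := f (v x) with hFdef
    set B := u x * b / F ^ (1 / (P - 1)) with hBdef
    have hP1 : (0:ℝ) < P - 1 := by linarith
    have hFr : 0 < F ^ (1 / (P - 1)) := Real.rpow_pos_of_pos hF _
    have hB : 0 ≤ B := div_nonneg (mul_nonneg hU hbn) hFr.le
    -- B^(P-1) = u^(P-1) b^(P-1) / F
    have hBp1 : B ^ (P - 1) = u x ^ (P - 1) * b ^ (P - 1) / F := by
      rw [hBdef, Real.div_rpow (mul_nonneg hU hbn) hFr.le,
        Real.mul_rpow hU hbn, ← Real.rpow_mul hF.le,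
        one_div, inv_mul_cancel₀ (by linarith : P - 1 ≠ 0), Real.rpow_one]
    -- B^P = u^P b^P / F^(P/(P-1))
    have hBp : B ^ P = u x ^ P * b ^ P / F ^ (P / (P - 1)) := by
      rw [hBdef, Real.div_rpow (mul_nonneg hU hbn) hFr.le,
        Real.mul_rpow hU hbn, ← Real.rpow_mul hF.le]
      congr 2
      field_simp
    -- middle term bound
    have hmid : P * (u x ^ (P - 1) / F) * b ^ (P - 2) * ⟪gradient v x, gradient u x⟫
        ≤ P * (a * B ^ (P - 1)) := by
      have hcs : ⟪gradient v x, gradient u x⟫ ≤ b * a := real_inner_le_norm _ _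
      have hco : 0 ≤ P * (u x ^ (P - 1) / F) * b ^ (P - 2) := by positivity
      have := mul_le_mul_of_nonneg_left hcs hco
      refine le_trans this (le_of_eq ?_)
      rw [hBp1]
      have hb21 : b ^ (P - 2) * b = b ^ (P - 1) := by
        rw [← Real.rpow_add_one (ne_of_gt hb) (P - 2)]
        congr 1
        ring
      field_simp
      rw [← hb21]
      ring
    -- last term bound
    have hFe : F ^ ((P - 2) / (P - 1)) / F ^ 2 = (F ^ (P / (P - 1)))⁻¹ := by
      rw [← Real.rpow_natCast F 2, ← Real.rpow_sub hF, ← Real.rpow_neg_one (F ^ (P / (P-1))),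
        ← Real.rpow_mul hF.le]
      congr 1
      push_cast
      field_simp
      ring
    have hlast : (P - 1) * B ^ P ≤ (u x ^ P * f' (v x) / F ^ 2) * b ^ P := by
      have h1 : (P - 1) * F ^ ((P - 2) / (P - 1)) ≤ f' (v x) := hf' x hx _ (hv0 x hx)
      have hc : 0 ≤ u x ^ P * b ^ P / F ^ 2 := by positivity
      have h2 := mul_le_mul_of_nonneg_right h1 hc
      calc (P - 1) * B ^ P
          = (P - 1) * F ^ ((P - 2) / (P - 1)) * (u x ^ P * b ^ P / F ^ 2) := by
            rw [hBp]
            rw [div_eq_mul_inv (u x ^ P * b ^ P), ← hFe]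
            ring
        _ ≤ f' (v x) * (u x ^ P * b ^ P / F ^ 2) := h2
        _ = (u x ^ P * f' (v x) / F ^ 2) * b ^ P := by ring
    have hyoung := young_aux ha hB hP
    linarith
end
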